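/- For all integers m ≥ 0 and k ≥ 0, R_K(m,k) = ∑_{j=0}^{k} C(⌊m/2⌋, j) · S(m−j, m−k). -/

import Mathlib

open Finset

/-- Stirling number of the second kind `S(n,l)`. -/
def stirling2 : ℕ → ℕ → ℕ
  | 0, 0 => 1
  | 0, _ + 1 => 0
  | _ + 1, 0 => 0
  | n + 1, l + 1 => (l + 1) * stirling2 n (l + 1) + stirling2 n l

/-- Stirling number of the second kind with integer lower argument, extended by
`S(n,l) = 0` whenever `l < 0`. -/
def stirlingZ (n : ℕ) (l : ℤ) : ℕ := if 0 ≤ l then stirling2 n l.toNat else 0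

/-- `blackCount m k` is the number of `k`-element subsets `P` of the black squares
`{(i,j) ∈ {1,…,m} × {1,…,m} : i+j odd}` such that any two distinct elements `(i,j)`
and `(i',j')` of `P` satisfy `i+j ≠ i'+j'` and `i−j ≠ i'−j'` (nonattacking bishops on
the black squares of the `m × m` board). -/
def blackCount (m k : ℕ) : ℕ :=
  ((((Finset.Icc 1 m ×ˢ Finset.Icc 1 m).filter (fun a => Odd (a.1 + a.2))).powersetCard
      k).filter
    (fun P => ∀ a ∈ P, ∀ b ∈ P, a ≠ b →
      a.1 + a.2 ≠ b.1 + b.2 ∧ (a.1 : ℤ) - a.2 ≠ (b.1 : ℤ) - b.2)).card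

lemma stirling2_eq_zero {n l : ℕ} (h : n < l) : stirling2 n l = 0 := by
  induction n generalizing l with
  | zero => obtain ⟨l, rfl⟩ : ∃ l', l = l' + 1 := ⟨l - 1, by omega⟩; rfl
  | succ n ih =>
      obtain ⟨l, rfl⟩ : ∃ l', l = l' + 1 := ⟨l - 1, by omega⟩
      show (l + 1) * stirling2 n (l + 1) + stirling2 n l = 0
      rw [ih (by omega), ih (by omega)]
      ring

lemma stirling2_self (n : ℕ) : stirling2 n n = 1 := by
  induction n with
  | zero => rfl
  | succ n ih =>
      show (n + 1) * stirling2 n (n + 1) + stirling2 n n = 1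
      rw [ih, stirling2_eq_zero (by omega)]
      ring

lemma stirlingZ_rec (n : ℕ) (l : ℤ) :
    (stirlingZ (n + 1) l : ℤ) = l * stirlingZ n l + stirlingZ n (l - 1) := by
  rcases lt_trichotomy l 0 with h | h | h
  · simp [stirlingZ, not_le.2 h, not_le.2 (by omega : l - 1 < 0)]
    intro h'; omega
  · subst h
    simp only [stirlingZ]
    norm_num
    rfl
  · obtain ⟨l', rfl⟩ : ∃ l' : ℕ, l = (l' : ℤ) + 1 := ⟨(l - 1).toNat, by omega⟩
    have h1 : ((l' : ℤ) + 1).toNat = l' + 1 := by omega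
    have h2 : ((l' : ℤ) + 1 - 1).toNat = l' := by omega
    simp only [stirlingZ, if_pos (by omega : (0:ℤ) ≤ (l':ℤ) + 1),
      if_pos (by omega : (0:ℤ) ≤ (l':ℤ) + 1 - 1), h1, h2]
    show ((stirling2 (n+1) (l'+1) : ℤ)) = _
    show (((l' + 1) * stirling2 n (l' + 1) + stirling2 n l' : ℕ) : ℤ) = _
    push_cast
    ring

lemma stirlingZ_eq_zero {n : ℕ} {l : ℤ} (h : (n : ℤ) < l) : stirlingZ n l = 0 := by
  simp only [stirlingZ, if_pos (by omega : (0:ℤ) ≤ l)]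
  exact stirling2_eq_zero (by omega)

lemma stirlingZ_self (n : ℕ) : stirlingZ n n = 1 := by
  simp only [stirlingZ, if_pos (by omega : (0:ℤ) ≤ (n:ℤ)), Int.toNat_natCast]
  exact stirling2_self n

/-- The right-hand side, as an integer-valued function with integer `k`. -/
def Tz (m : ℕ) (k : ℤ) : ℤ :=
  ∑ j ∈ Finset.range (k + 1).toNat, ((m / 2).choose j : ℤ) * (stirlingZ (m - j) ((m : ℤ) - k) : ℤ)

lemma Tz_natCast (m k : ℕ) :
    Tz m (k : ℤ) = ∑ j ∈ Finset.range (k + 1),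
      ((m / 2).choose j : ℤ) * (stirlingZ (m - j) ((m : ℤ) - k) : ℤ) := by
  have : ((k : ℤ) + 1).toNat = k + 1 := by omega
  rw [Tz, this]

lemma Tz_pred (m k : ℕ) :
    Tz m ((k : ℤ) - 1) = ∑ j ∈ Finset.range k,
      ((m / 2).choose j : ℤ) * (stirlingZ (m - j) ((m : ℤ) + 1 - k) : ℤ) := by
  have h1 : ((k : ℤ) - 1 + 1).toNat = k := by omega
  have h2 : (m : ℤ) - ((k : ℤ) - 1) = (m : ℤ) + 1 - k := by ring
  rw [Tz, h1, h2]

lemma Tz_zero (m : ℕ) : Tz m 0 = 1 := by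
  rw [show (0:ℤ) = ((0:ℕ):ℤ) from rfl, Tz_natCast]
  simp [stirlingZ_self]

lemma Tz_one (k : ℕ) : Tz 1 (k : ℤ) = if k = 0 then 1 else 0 := by
  rw [Tz_natCast]
  rcases Nat.eq_zero_or_pos k with rfl | hk
  · norm_num [stirlingZ]
    rfl
  · rw [if_neg (by omega)]
    apply Finset.sum_eq_zero
    intro j hj
    rcases Nat.eq_zero_or_pos j with rfl | hj'
    · have hz : stirlingZ (1 - 0) (((1:ℕ) : ℤ) - (k : ℕ)) = 0 := by
        rcases Nat.lt_or_ge k 2 with hk2 | hk2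
        · have : k = 1 := by omega
          subst this
          norm_num [stirlingZ]
          rfl
        · simp only [stirlingZ, if_neg (by push_cast; omega : ¬ (0:ℤ) ≤ ((1:ℕ):ℤ) - (k:ℕ))]
      rw [hz]
      ring
    · rw [Nat.choose_eq_zero_of_lt (by norm_num; omega)]
      ring

/-- Key summation step. -/
lemma aux_sum (a m k : ℕ) (ha : a ≤ m) :
    ∑ j ∈ range (k + 1), (a.choose j : ℤ) * stirlingZ (m + 1 - j) ((m : ℤ) + 1 - k)
    = ((m : ℤ) + 1 - k) * (∑ j ∈ range k, (a.choose j : ℤ) * stirlingZ (m - j) ((m : ℤ) + 1 - k))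
      + ∑ j ∈ range (k + 1), (a.choose j : ℤ) * stirlingZ (m - j) ((m : ℤ) - k) := by
  have step : ∀ j ∈ range (k + 1),
      (a.choose j : ℤ) * stirlingZ (m + 1 - j) ((m : ℤ) + 1 - k)
      = ((m : ℤ) + 1 - k) * ((a.choose j : ℤ) * stirlingZ (m - j) ((m : ℤ) + 1 - k))
        + (a.choose j : ℤ) * stirlingZ (m - j) ((m : ℤ) - k) := by
    intro j hj
    by_cases hja : j ≤ a
    · rw [show m + 1 - j = (m - j) + 1 by omega, stirlingZ_rec]
      rw [show (m : ℤ) + 1 - k - 1 = (m : ℤ) - k by ring]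
      ring
    · rw [Nat.choose_eq_zero_of_lt (by omega)]
      push_cast
      ring
  rw [Finset.sum_congr rfl step, Finset.sum_add_distrib, ← Finset.mul_sum]
  congr 2
  rw [Finset.sum_range_succ]
  have hlast : (a.choose k : ℤ) * stirlingZ (m - k) ((m : ℤ) + 1 - k) = 0 := by
    by_cases hk : k ≤ a
    · rw [stirlingZ_eq_zero (by omega)]
      ring
    · rw [Nat.choose_eq_zero_of_lt (by omega)]
      ring
  rw [hlast, add_zero]


lemma split0 (a k : ℕ) (X : ℤ) :
    ∑ j ∈ range (k + 1), ((a + 1).choose j : ℤ) * stirlingZ (2 * a + 1 + 1 - j) X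
    = (∑ i ∈ range k, (a.choose i : ℤ) * stirlingZ (2 * a + 1 - i) X)
      + ∑ j ∈ range (k + 1), (a.choose j : ℤ) * stirlingZ (2 * a + 1 + 1 - j) X := by
  rw [Finset.sum_range_succ' (fun j => ((a + 1).choose j : ℤ) * stirlingZ (2 * a + 1 + 1 - j) X) k]
  rw [Finset.sum_range_succ' (fun j => (a.choose j : ℤ) * stirlingZ (2 * a + 1 + 1 - j) X) k]
  have hc : ∀ i ∈ range k,
      ((a + 1).choose (i + 1) : ℤ) * stirlingZ (2 * a + 1 + 1 - (i + 1)) X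
      = (a.choose i : ℤ) * stirlingZ (2 * a + 1 - i) X
        + (a.choose (i + 1) : ℤ) * stirlingZ (2 * a + 1 + 1 - (i + 1)) X := by
    intro i _
    rw [Nat.choose_succ_succ, show 2 * a + 1 + 1 - (i + 1) = 2 * a + 1 - i by omega]
    push_cast
    ring
  rw [Finset.sum_congr rfl hc, Finset.sum_add_distrib]
  simp only [Nat.choose_zero_right, Nat.cast_one]
  ring

/-- The central recurrence for the closed-form side. -/
lemma Tz_succ (m k : ℕ) :
    Tz (m + 1) (k : ℤ) = Tz m (k : ℤ)
      + (2 * (((m + 1) / 2 : ℕ) : ℤ) + 1 - k) * Tz m ((k : ℤ) - 1) := by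
  rcases Nat.even_or_odd m with ⟨a, rfl⟩ | ⟨a, rfl⟩
  · -- m = a + a even
    have h2 : (a + a + 1) / 2 = a := by omega
    have h3 : (a + a) / 2 = a := by omega
    have key := aux_sum a (a + a) k (by omega)
    rw [Tz_natCast, Tz_natCast, Tz_pred, h2, h3,
        show ((a + a + 1 : ℕ) : ℤ) = ((a + a : ℕ) : ℤ) + 1 by push_cast; ring]
    rw [show ((a + a : ℕ) : ℤ) = (a : ℤ) + a by push_cast; ring] at key ⊢
    linear_combination key
  · -- m = 2a + 1 odd
    have h2 : (2 * a + 1 + 1) / 2 = a + 1 := by omega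
    have h3 : (2 * a + 1) / 2 = a := by omega
    have key2 := aux_sum a (2 * a + 1) k (by omega)
    have key1 := split0 a k (((2 * a + 1 : ℕ) : ℤ) + 1 - k)
    rw [Tz_natCast, Tz_natCast, Tz_pred, h2, h3,
        show ((2 * a + 1 + 1 : ℕ) : ℤ) = ((2 * a + 1 : ℕ) : ℤ) + 1 by push_cast; ring]
    rw [show ((2 * a + 1 : ℕ) : ℤ) = 2 * (a : ℤ) + 1 by push_cast; ring] at key1 key2 ⊢
    rw [show ((a + 1 : ℕ) : ℤ) = (a : ℤ) + 1 by push_cast; ring]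
    linear_combination key1 + key2

def cellB (m : ℕ) : Finset (ℕ × ℕ) := Finset.Icc 1 m ×ˢ Finset.Icc 1 m

def cells (m : ℕ) (D : Finset ℕ) : Finset (ℕ × ℕ) :=
  (cellB m).filter (fun a => a.1 + a.2 ∈ D)

def ok (P : Finset (ℕ × ℕ)) : Prop :=
  ∀ a ∈ P, ∀ b ∈ P, a ≠ b → a.1 + a.2 ≠ b.1 + b.2 ∧ (a.1 : ℤ) - a.2 ≠ (b.1 : ℤ) - b.2

instance : DecidablePred ok := fun _ => by unfold ok; infer_instance

def cnt (m : ℕ) (D : Finset ℕ) (k : ℕ) : ℕ :=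
  (((cells m D).powersetCard k).filter ok).card

def diagF (m d : ℕ) : Finset (ℕ × ℕ) := (cellB m).filter (fun a => a.1 + a.2 = d)

def eF (m d : ℕ) : Finset ℤ := (diagF m d).image (fun a => (a.1 : ℤ) - a.2)

lemma ok_mono {P Q : Finset (ℕ × ℕ)} (h : P ⊆ Q) (hQ : ok Q) : ok P :=
  fun a ha b hb hne => hQ a (h ha) b (h hb) hne

lemma ok_empty : ok ∅ := by intro a ha; simp at ha

lemma cnt_zero (m : ℕ) (D : Finset ℕ) : cnt m D 0 = 1 := by
  rw [cnt, Finset.powersetCard_zero]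
  have : Finset.filter ok {(∅ : Finset (ℕ × ℕ))} = {∅} := by
    apply Finset.filter_eq_self.2
    intro P hP
    rw [Finset.mem_singleton] at hP
    subst hP
    exact ok_empty
  rw [this]
  simp

lemma cnt_eq_zero (m : ℕ) (D : Finset ℕ) (k : ℕ) (E : Finset ℤ)
    (hdom : ∀ a ∈ cells m D, ((a.1 : ℤ) - a.2) ∈ E) (hk : E.card < k) : cnt m D k = 0 := by
  rw [cnt, Finset.card_eq_zero, Finset.filter_eq_empty_iff]
  intro P hP hok
  rw [Finset.mem_powersetCard] at hP
  obtain ⟨hsub, hcard⟩ := hP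
  have hinj : Set.InjOn (fun a : ℕ × ℕ => (a.1 : ℤ) - a.2) ↑P := by
    intro x hx y hy hxy
    by_contra hne
    exact (hok x hx y hy hne).2 hxy
  have h1 : (P.image (fun a => (a.1 : ℤ) - a.2)).card = k := by
    rw [Finset.card_image_of_injOn hinj, hcard]
  have h2 : P.image (fun a => (a.1 : ℤ) - a.2) ⊆ E := by
    intro x hx
    rw [Finset.mem_image] at hx
    obtain ⟨a, ha, rfl⟩ := hx
    exact hdom a (hsub ha)
  have := Finset.card_le_card h2
  omega

lemma ef_injOn_diag (m d : ℕ) : Set.InjOn (fun a : ℕ × ℕ => (a.1 : ℤ) - a.2) ↑(diagF m d) := by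
  intro a ha b hb h
  simp only [diagF, cellB, Finset.coe_filter, Set.mem_setOf_eq, Finset.mem_product,
    Finset.mem_Icc] at ha hb
  simp only at h
  have h1 : a.1 + a.2 = d := ha.2
  have h2 : b.1 + b.2 = d := hb.2
  have : a.1 = b.1 ∧ a.2 = b.2 := by omega
  exact Prod.ext this.1 this.2

lemma removal (m : ℕ) (D : Finset ℕ) (d : ℕ) (hd : d ∈ D) (k : ℕ)
    (hdom : ∀ a ∈ cells m D, ((a.1 : ℤ) - a.2) ∈ eF m d) :
    cnt m D (k + 1)
      = cnt m (D.erase d) (k + 1) + ((diagF m d).card - k) * cnt m (D.erase d) k := by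
  classical
  have hcells' : cells m (D.erase d) = (cells m D).filter (fun a => ¬ a.1 + a.2 = d) := by
    ext a
    simp only [cells, Finset.mem_filter, Finset.mem_erase]
    tauto
  set p : Finset (ℕ × ℕ) → Prop := fun P => ∃ a ∈ P, a.1 + a.2 = d with hp
  set S : Finset (Finset (ℕ × ℕ)) := ((cells m D).powersetCard (k + 1)).filter ok with hS
  have hsplit := Finset.card_filter_add_card_filter_not (s := S) (p := p)
  -- part 1 : placements avoiding diagonal d
  have part1 : S.filter (fun P => ¬ p P) = ((cells m (D.erase d)).powersetCard (k + 1)).filter ok := by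
    ext P
    simp only [hS, hp, Finset.mem_filter, Finset.mem_powersetCard, hcells', Finset.subset_iff,
      Finset.mem_filter, not_exists, not_and]
    constructor
    · rintro ⟨⟨⟨hsub, hcard⟩, hok⟩, hnex⟩
      exact ⟨⟨fun x hx => ⟨hsub hx, fun hh => hnex x hx hh⟩, hcard⟩, hok⟩
    · rintro ⟨⟨hsub, hcard⟩, hok⟩
      exact ⟨⟨⟨fun x hx => (hsub hx).1, hcard⟩, hok⟩, fun x hx hh => (hsub hx).2 hh⟩
  -- part 2 : placements using diagonal d
  set S' : Finset (Finset (ℕ × ℕ)) := ((cells m (D.erase d)).powersetCard k).filter ok with hS'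
  have hmap : ∀ P ∈ S.filter p, P.filter (fun a => ¬ a.1 + a.2 = d) ∈ S' := by
    intro P hP
    rw [Finset.mem_filter] at hP
    obtain ⟨hPS, a₀, ha₀P, ha₀d⟩ := hP
    rw [hS, Finset.mem_filter, Finset.mem_powersetCard] at hPS
    obtain ⟨⟨hsub, hcard⟩, hok⟩ := hPS
    have hfe : P.filter (fun a => ¬ a.1 + a.2 = d) = P.erase a₀ := by
      ext x
      simp only [Finset.mem_filter, Finset.mem_erase]
      constructor
      · rintro ⟨hx, hs⟩
        refine ⟨fun hxa => hs ?_, hx⟩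
        subst hxa; exact ha₀d
      · rintro ⟨hne, hx⟩
        refine ⟨hx, fun hs => (hok x hx a₀ ha₀P hne).1 (hs.trans ha₀d.symm)⟩
    rw [hS', Finset.mem_filter, Finset.mem_powersetCard]
    refine ⟨⟨?_, ?_⟩, ok_mono (Finset.filter_subset _ _) hok⟩
    · intro x hx
      rw [hcells', Finset.mem_filter]
      rw [Finset.mem_filter] at hx
      exact ⟨hsub hx.1, hx.2⟩
    · rw [hfe, Finset.card_erase_of_mem ha₀P, hcard]
      omega
  have hcardsum := Finset.card_eq_sum_card_fiberwise hmap
  have hfiber : ∀ Q ∈ S',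
      ((S.filter p).filter (fun P => P.filter (fun a => ¬ a.1 + a.2 = d) = Q)).card
        = (diagF m d).card - k := by
    intro Q hQ
    rw [hS', Finset.mem_filter, Finset.mem_powersetCard] at hQ
    obtain ⟨⟨hQsub, hQcard⟩, hQok⟩ := hQ
    have hQd : ∀ b ∈ Q, ¬ b.1 + b.2 = d := by
      intro b hb
      have := hQsub hb
      rw [hcells', Finset.mem_filter] at this
      exact this.2
    have hQD : Q ⊆ cells m D := by
      intro b hb
      have := hQsub hb
      rw [hcells', Finset.mem_filter] at this
      exact this.1
    set ef : ℕ × ℕ → ℤ := fun a => (a.1 : ℤ) - a.2 with hef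
    set C : Finset (ℕ × ℕ) := (diagF m d).filter (fun c => ef c ∉ Q.image ef) with hC
    have claim1 : (S.filter p).filter (fun P => P.filter (fun a => ¬ a.1 + a.2 = d) = Q)
        = C.image (fun c => insert c Q) := by
      ext P
      constructor
      · intro hP
        rw [Finset.mem_filter] at hP
        obtain ⟨hP1, hPQ⟩ := hP
        rw [Finset.mem_filter] at hP1
        obtain ⟨hPS, a₀, ha₀P, ha₀d⟩ := hP1
        rw [hS, Finset.mem_filter, Finset.mem_powersetCard] at hPS
        obtain ⟨⟨hsub, hcard⟩, hok⟩ := hPS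
        have hPeq : P = insert a₀ Q := by
          ext x
          rw [Finset.mem_insert]
          constructor
          · intro hx
            by_cases hxd : x.1 + x.2 = d
            · left
              by_contra hne
              exact (hok x hx a₀ ha₀P hne).1 (hxd.trans ha₀d.symm)
            · right
              rw [← hPQ, Finset.mem_filter]
              exact ⟨hx, hxd⟩
          · rintro (rfl | hx)
            · exact ha₀P
            · rw [← hPQ, Finset.mem_filter] at hx
              exact hx.1
        have ha₀C : a₀ ∈ C := by
          rw [hC, Finset.mem_filter]
          constructor
          · rw [diagF, Finset.mem_filter]
            have := hsub ha₀P
            rw [cells, Finset.mem_filter] at this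
            exact ⟨this.1, ha₀d⟩
          · intro hmem
            rw [Finset.mem_image] at hmem
            obtain ⟨b, hb, hefb⟩ := hmem
            have hbne : b ≠ a₀ := by
              intro h
              exact hQd b hb (by rw [h]; exact ha₀d)
            have hbP : b ∈ P := by
              rw [hPeq]; exact Finset.mem_insert_of_mem hb
            exact (hok b hbP a₀ ha₀P hbne).2 hefb
        rw [Finset.mem_image]
        exact ⟨a₀, ha₀C, hPeq.symm⟩
      · intro hP
        rw [Finset.mem_image] at hP
        obtain ⟨c, hc, rfl⟩ := hP
        rw [hC, Finset.mem_filter] at hc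
        obtain ⟨hcd, hcQ⟩ := hc
        rw [diagF, Finset.mem_filter] at hcd
        obtain ⟨hcell, hcsum⟩ := hcd
        have hcnotQ : c ∉ Q := fun h => hQd c h hcsum
        have hokins : ok (insert c Q) := by
          intro x hx y hy hne
          rcases Finset.mem_insert.1 hx with rfl | hx' <;>
            rcases Finset.mem_insert.1 hy with rfl | hy'
          · exact absurd rfl hne
          · constructor
            · rw [hcsum]; exact fun h => hQd y hy' h.symm
            · intro h
              exact hcQ (Finset.mem_image.2 ⟨y, hy', h.symm⟩)
          · constructor
            · rw [hcsum]; exact fun h => hQd x hx' h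
            · intro h
              exact hcQ (Finset.mem_image.2 ⟨x, hx', h⟩)
          · exact hQok x hx' y hy' hne
        rw [Finset.mem_filter, Finset.mem_filter]
        refine ⟨⟨?_, ⟨c, Finset.mem_insert_self c Q, hcsum⟩⟩, ?_⟩
        · rw [hS, Finset.mem_filter, Finset.mem_powersetCard]
          refine ⟨⟨?_, ?_⟩, hokins⟩
          · apply Finset.insert_subset
            · rw [cells, Finset.mem_filter]
              exact ⟨hcell, by rw [hcsum]; exact hd⟩
            · exact hQD
          · rw [Finset.card_insert_of_notMem hcnotQ, hQcard]
        · ext x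
          simp only [Finset.mem_filter, Finset.mem_insert]
          constructor
          · rintro ⟨rfl | hx, hxd⟩
            · exact absurd hcsum hxd
            · exact hx
          · intro hx
            exact ⟨Or.inr hx, hQd x hx⟩
    have claim2 : (C.image (fun c => insert c Q)).card = C.card := by
      apply Finset.card_image_of_injOn
      intro c1 hc1 c2 hc2 hins
      have hins' : insert c1 Q = insert c2 Q := hins
      have hc1' : c1 ∉ Q := by
        rw [hC, Finset.mem_coe, Finset.mem_filter, diagF, Finset.mem_filter] at hc1
        exact fun h => hQd c1 h hc1.1.2
      have : c1 ∈ insert c2 Q := by rw [← hins']; exact Finset.mem_insert_self _ _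
      rcases Finset.mem_insert.1 this with h | h
      · exact h
      · exact absurd h hc1'
    have claim3 : C.card = (diagF m d).card - k := by
      have hk : ((diagF m d).filter (fun c => ef c ∈ Q.image ef)).card = k := by
        have himg : ((diagF m d).filter (fun c => ef c ∈ Q.image ef)).image ef = Q.image ef := by
          apply Finset.Subset.antisymm
          · intro x hx
            rw [Finset.mem_image] at hx
            obtain ⟨c, hc, rfl⟩ := hx
            exact (Finset.mem_filter.1 hc).2
          · intro x hx
            obtain ⟨b, hb, rfl⟩ := Finset.mem_image.1 hx
            have := hdom b (hQD hb)
            rw [eF, Finset.mem_image] at this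
            obtain ⟨c, hc, hcb⟩ := this
            rw [Finset.mem_image]
            refine ⟨c, Finset.mem_filter.2 ⟨hc, ?_⟩, hcb⟩
            show ef c ∈ Finset.image ef Q
            exact Finset.mem_image.2 ⟨b, hb, (by exact hcb.symm)⟩
        have hinj : Set.InjOn ef ↑((diagF m d).filter (fun c => ef c ∈ Q.image ef)) := by
          apply Set.InjOn.mono _ (ef_injOn_diag m d)
          intro x hx
          rw [Finset.mem_coe, Finset.mem_filter] at hx
          exact hx.1
        have hQinj : Set.InjOn ef ↑Q := by
          intro x hx y hy hxy
          by_contra hne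
          exact (hQok x hx y hy hne).2 hxy
        calc ((diagF m d).filter (fun c => ef c ∈ Q.image ef)).card
            = (((diagF m d).filter (fun c => ef c ∈ Q.image ef)).image ef).card :=
              (Finset.card_image_of_injOn hinj).symm
          _ = (Q.image ef).card := by rw [himg]
          _ = k := by rw [Finset.card_image_of_injOn hQinj, hQcard]
      have := Finset.card_filter_add_card_filter_not
        (s := diagF m d) (p := fun c => ef c ∈ Q.image ef)
      rw [hC]
      omega
    rw [claim1, claim2, claim3]
  rw [hcardsum, Finset.sum_congr rfl hfiber, Finset.sum_const, smul_eq_mul] at hsplit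
  have : cnt m D (k + 1) = S.card := rfl
  rw [this, ← hsplit, part1]
  have h1 : cnt m (D.erase d) (k + 1) = (((cells m (D.erase d)).powersetCard (k + 1)).filter ok).card := rfl
  have h2 : cnt m (D.erase d) k = S'.card := rfl
  rw [h1, h2]
  ring

/-! ### Diagonal sequence -/

def dseq (m i : ℕ) : ℕ := if i % 2 = 0 then i + 3 else 2 * m - i
def Dseq (m t : ℕ) : Finset ℕ := (Finset.range t).image (dseq m)

lemma dseq_inj (m : ℕ) {i j : ℕ} (hi : i + 1 < m) (hj : j + 1 < m)
    (h : dseq m i = dseq m j) : i = j := by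
  unfold dseq at h
  split_ifs at h <;> omega

lemma Dseq_succ (m i : ℕ) : Dseq m (i + 1) = insert (dseq m i) (Dseq m i) := by
  rw [Dseq, Dseq, Finset.range_add_one, Finset.image_insert]

lemma dseq_mem (m i : ℕ) : dseq m i ∈ Dseq m (i + 1) :=
  Finset.mem_image.2 ⟨i, Finset.mem_range.2 (Nat.lt_succ_self i), rfl⟩

lemma erase_Dseq (m i : ℕ) (hi : i + 1 < m) :
    (Dseq m (i + 1)).erase (dseq m i) = Dseq m i := by
  rw [Dseq_succ, Finset.erase_insert]
  intro hmem
  rw [Dseq, Finset.mem_image] at hmem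
  obtain ⟨j, hj, hdj⟩ := hmem
  rw [Finset.mem_range] at hj
  have := dseq_inj m (by omega) hi hdj
  omega

lemma diagF_eq (m d : ℕ) :
    diagF m d = (Finset.Icc (max 1 (d - m)) (min m (d - 1))).image (fun i => (i, d - i)) := by
  ext x
  rw [diagF, cellB, Finset.mem_filter, Finset.mem_product, Finset.mem_Icc, Finset.mem_Icc,
    Finset.mem_image]
  constructor
  · rintro ⟨⟨⟨h1, h2⟩, h3, h4⟩, h5⟩
    refine ⟨x.1, Finset.mem_Icc.2 ⟨by omega, by omega⟩, ?_⟩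
    show (x.1, d - x.1) = x
    exact Prod.ext rfl (by omega)
  · rintro ⟨i, hi, heq⟩
    rw [Finset.mem_Icc] at hi
    subst heq
    dsimp only
    omega

lemma diagF_card_dseq (m i : ℕ) (hi : i + 1 < m) :
    (diagF m (dseq m i)).card = 2 * ((i + 2) / 2) := by
  rw [diagF_eq, Finset.card_image_of_injOn (by
    intro a _ b _ hab
    exact congrArg Prod.fst hab), Nat.card_Icc]
  unfold dseq
  split_ifs <;> omega

lemma eF_card_dseq (m i : ℕ) (hi : i + 1 < m) :
    (eF m (dseq m i)).card = 2 * ((i + 2) / 2) := by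
  rw [eF, Finset.card_image_of_injOn (ef_injOn_diag m (dseq m i)), diagF_card_dseq m i hi]

lemma mem_eF_of (m d : ℕ) (hd : d % 2 = 1) (x : ℤ)
    (hpar : x % 2 = 1) (hub : x ≤ (d : ℤ) - 2) (hub2 : x ≤ 2 * (m : ℤ) - d)
    (hlb : -x ≤ (d : ℤ) - 2) (hlb2 : -x ≤ 2 * (m : ℤ) - d) :
    x ∈ eF m d := by
  have hq : ((d : ℤ) + x) % 2 = 0 := by omega
  set q := ((d : ℤ) + x) / 2 with hqdef
  have hq2 : (d : ℤ) + x = 2 * q := by omega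
  have hq1 : 1 ≤ q := by omega
  have hqm : q ≤ (m : ℤ) := by omega
  have hqd : q ≤ (d : ℤ) - 1 := by omega
  refine Finset.mem_image.2 ⟨(q.toNat, d - q.toNat), ?_, ?_⟩
  · rw [diagF, Finset.mem_filter, cellB, Finset.mem_product, Finset.mem_Icc, Finset.mem_Icc]
    refine ⟨⟨⟨by omega, by omega⟩, by omega, by omega⟩, by simp only; omega⟩
  · simp only
    omega

lemma hdom_lemma (m i : ℕ) (hi : i + 1 < m) :
    ∀ a ∈ cells m (Dseq m (i + 1)), ((a.1 : ℤ) - a.2) ∈ eF m (dseq m i) := by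
  intro a ha
  rw [cells, Finset.mem_filter] at ha
  obtain ⟨hcell, hsum⟩ := ha
  rw [Dseq, Finset.mem_image] at hsum
  obtain ⟨j, hj, hdj⟩ := hsum
  rw [Finset.mem_range] at hj
  rw [cellB, Finset.mem_product, Finset.mem_Icc, Finset.mem_Icc] at hcell
  obtain ⟨⟨h11, h12⟩, h21, h22⟩ := hcell
  have hsi : (i % 2 = 0 ∧ dseq m i = i + 3) ∨ (i % 2 = 1 ∧ dseq m i = 2 * m - i) := by
    unfold dseq
    split_ifs with h
    · exact Or.inl ⟨h, rfl⟩
    · exact Or.inr ⟨by omega, rfl⟩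
  have hsj : (j % 2 = 0 ∧ dseq m j = j + 3) ∨ (j % 2 = 1 ∧ dseq m j = 2 * m - j) := by
    unfold dseq
    split_ifs with h
    · exact Or.inl ⟨h, rfl⟩
    · exact Or.inr ⟨by omega, rfl⟩
  apply mem_eF_of <;>
    rcases hsi with ⟨hp1, hp2⟩ | ⟨hp1, hp2⟩ <;>
    rcases hsj with ⟨hq1, hq2⟩ | ⟨hq1, hq2⟩ <;>
    omega

lemma cells_full (m : ℕ) :
    cells m (Dseq m (m - 1)) = (cellB m).filter (fun a => Odd (a.1 + a.2)) := by
  ext a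
  rw [cells, Finset.mem_filter, Finset.mem_filter]
  refine and_congr_right fun hcell => ?_
  rw [cellB, Finset.mem_product, Finset.mem_Icc, Finset.mem_Icc] at hcell
  obtain ⟨⟨h11, h12⟩, h21, h22⟩ := hcell
  rw [Nat.odd_iff]
  constructor
  · intro hmem
    rw [Dseq, Finset.mem_image] at hmem
    obtain ⟨j, hj, hdj⟩ := hmem
    rw [Finset.mem_range] at hj
    unfold dseq at hdj
    split_ifs at hdj <;> omega
  · intro hodd
    rw [Dseq, Finset.mem_image]
    refine ⟨if a.1 + a.2 ≤ m + 1 then a.1 + a.2 - 3 else 2 * m - (a.1 + a.2),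
      Finset.mem_range.2 ?_, ?_⟩
    · split_ifs <;> omega
    · unfold dseq
      split_ifs <;> omega

lemma cnt_empty (m k : ℕ) : cnt m ∅ k = if k = 0 then 1 else 0 := by
  rcases Nat.eq_zero_or_pos k with rfl | hk
  · rw [cnt_zero, if_pos rfl]
  · rw [if_neg (by omega), cnt, Finset.card_eq_zero]
    have hc : cells m ∅ = ∅ := by
      rw [cells]
      apply Finset.filter_eq_empty_iff.2
      intro a _
      simp
    rw [hc, Finset.powersetCard_eq_empty.2 (by simp; omega), Finset.filter_empty]

lemma Dseq_zero (m : ℕ) : Dseq m 0 = ∅ := by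
  rw [Dseq, Finset.range_zero, Finset.image_empty]

lemma Tz_zero' (k : ℕ) : Tz 0 (k : ℤ) = if k = 0 then 1 else 0 := by
  rw [Tz_natCast]
  rcases Nat.eq_zero_or_pos k with rfl | hk
  · norm_num [stirlingZ]
    rfl
  · rw [if_neg (by omega)]
    apply Finset.sum_eq_zero
    intro j hj
    rcases Nat.eq_zero_or_pos j with rfl | hj'
    · have hz : stirlingZ (0 - 0) (((0:ℕ) : ℤ) - (k : ℕ)) = 0 := by
        simp only [stirlingZ, if_neg (by push_cast; omega : ¬ (0:ℤ) ≤ ((0:ℕ):ℤ) - (k:ℕ))]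
      rw [hz]
      ring
    · rw [Nat.choose_eq_zero_of_lt (by norm_num; omega)]
      ring

/-- The main chain induction. -/
lemma chain (m : ℕ) : ∀ i, i + 1 ≤ m → ∀ k : ℕ, (cnt m (Dseq m i) k : ℤ) = Tz (i + 1) (k : ℤ) := by
  intro i
  induction i with
  | zero =>
      intro _ k
      rw [Dseq_zero, cnt_empty, Tz_one]
      split_ifs <;> norm_num
  | succ i ih =>
      intro hi k
      rcases Nat.eq_zero_or_pos k with rfl | hk
      · rw [cnt_zero]
        rw [show ((0:ℕ):ℤ) = (0:ℤ) by norm_num, Tz_zero]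
        norm_num
      obtain ⟨k'', rfl⟩ : ∃ k'', k = k'' + 1 := ⟨k - 1, by omega⟩
      have hi' : i + 1 < m := by omega
      have hrem := removal m (Dseq m (i + 1)) (dseq m i) (dseq_mem m i) k'' (hdom_lemma m i hi')
      rw [erase_Dseq m i hi', diagF_card_dseq m i hi'] at hrem
      have IH1 := ih (by omega) (k'' + 1)
      have IH2 := ih (by omega) k''
      have hTs := Tz_succ (i + 1) (k'' + 1)
      rw [show (((k'' + 1 : ℕ)) : ℤ) - 1 = (k'' : ℤ) by push_cast; ring] at hTs
      rw [show i + 1 + 1 = i + 2 by omega] at hTs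
      by_cases hbig : k'' ≤ 2 * ((i + 2) / 2)
      · rw [hrem, Nat.cast_add, Nat.cast_mul, Nat.cast_sub hbig, IH1, IH2,
          show i + 1 + 1 = i + 2 by omega, hTs]
        push_cast
        ring
      · have h0 : cnt m (Dseq m i) k'' = 0 := by
          apply cnt_eq_zero m (Dseq m i) k'' (eF m (dseq m i))
          · intro a ha
            apply hdom_lemma m i hi' a
            rw [cells, Finset.mem_filter] at ha ⊢
            refine ⟨ha.1, ?_⟩
            rw [Dseq_succ, Finset.mem_insert]
            exact Or.inr ha.2
          · rw [eF_card_dseq m i hi']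
            omega
        have hz : Tz (i + 1) (k'' : ℤ) = 0 := by
          rw [← IH2, h0]
          norm_num
        rw [hrem, h0, Nat.mul_zero, Nat.add_zero, IH1,
          show i + 1 + 1 = i + 2 by omega, hTs, hz]
        ring

/-- Closed form for nonattacking bishop placements on the black squares. -/
theorem black_bishop_closed_form (m k : ℕ) :
    blackCount m k =
      ∑ j ∈ Finset.range (k + 1),
        Nat.choose (m / 2) j * stirlingZ (m - j) ((m : ℤ) - k) := by
  have hbs : blackCount m k = cnt m (Dseq m (m - 1)) k := by
    rw [cnt, cells_full]
    rfl
  have hmain : (blackCount m k : ℤ) = Tz m (k : ℤ) := by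
    rcases Nat.eq_zero_or_pos m with rfl | hm
    · rw [hbs, show (0 : ℕ) - 1 = 0 by omega, Dseq_zero, cnt_empty, Tz_zero']
      split_ifs <;> norm_num
    · rw [hbs, chain m (m - 1) (by omega) k, show m - 1 + 1 = m by omega]
  have hcast : ((∑ j ∈ Finset.range (k + 1),
      Nat.choose (m / 2) j * stirlingZ (m - j) ((m : ℤ) - k) : ℕ) : ℤ) = Tz m (k : ℤ) := by
    rw [Tz_natCast]
    push_cast
    rfl
  exact_mod_cast hmain.trans hcast.symm
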